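/- In the Erlang-C setup with 0 < R < n, let W be any real random variable with cumulative distribution function F_W, and let ω(F_W) := sup_{x ≠ y} |F_W(x) − F_W(y)|/|x − y| be its Lipschitz modulus. Then for every a ∈ ℝ, P(a − δ < X̃(∞) ≤ a + δ) ≤ 2δ·ω(F_W) + d_K(X̃(∞), W) + 9δ² + 8δ⁴. -/

import Mathlib

open MeasureTheory Set

set_option maxHeartbeats 2000000 in
/-- Anti-concentration transfer for the Erlang-C model: for any random variable
`W` with cdf `F_W`, Lipschitz modulus `ω` of `F_W`, and Kolmogorov distance
`d_K(X̃(∞), W)`, the probability that `X̃(∞)` lies in `(a − δ, a + δ]` is at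
most `2δ·ω + d_K + 9δ² + 8δ⁴`. -/
theorem erlangC_point_mass_bound
    (lam mu : ℝ) (n : ℕ)
    (hlam : 0 < lam) (hmu : 0 < mu) (hn : 1 ≤ n)
    (R δ ζ : ℝ)
    (hR : R = lam / mu) (hR0 : 0 < R) (hRn : R < (n : ℝ))
    (hδ : δ = 1 / Real.sqrt R) (hζ : ζ = δ * (R - (n : ℝ)))
    (pi : ℕ → ℝ)
    (hpi_nonneg : ∀ k, 0 ≤ pi k)
    (hpi_sum : (∑' k : ℕ, pi k) = 1)
    (hflow : ∀ k : ℕ, lam * pi k = mu * min ((k : ℝ) + 1) (n : ℝ) * pi (k + 1))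
    (muW : Measure ℝ) [IsProbabilityMeasure muW]
    (F : ℝ → ℝ) (hF : ∀ t : ℝ, F t = (muW (Set.Iic t)).toReal)
    (om : ℝ)
    (hom : ∀ s t : ℝ, |F s - F t| ≤ om * |s - t|)
    (dK : ℝ)
    (hdK : ∀ t : ℝ,
      |(∑' k : ℕ, if δ * ((k : ℝ) - R) ≤ t then pi k else 0) - F t| ≤ dK)
    (a : ℝ) :
    (∑' k : ℕ,
        if a - δ < δ * ((k : ℝ) - R) ∧ δ * ((k : ℝ) - R) ≤ a + δ then pi k else 0)
      ≤ om * (2 * δ) + dK + 9 * δ ^ 2 + 8 * δ ^ 4 := by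
  -- basic positivity facts
  have hδ0 : 0 < δ := by
    rw [hδ]
    exact div_pos one_pos (Real.sqrt_pos.mpr hR0)
  have hδsq : δ ^ 2 = 1 / R := by
    rw [hδ, div_pow, one_pow, Real.sq_sqrt hR0.le]
  have hδ4 : δ ^ 4 = 1 / R ^ 2 := by
    rw [show δ ^ 4 = (δ ^ 2) ^ 2 by ring, hδsq, div_pow, one_pow]
  have hdK0 : 0 ≤ dK := le_trans (abs_nonneg _) (hdK 0)
  have hom0 : 0 ≤ om := by
    have h := hom 0 1
    have h2 : |(0:ℝ) - 1| = 1 := by norm_num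
    rw [h2, mul_one] at h
    exact le_trans (abs_nonneg _) h
  have hsummable : Summable pi := by
    by_contra h
    rw [tsum_eq_zero_of_not_summable h] at hpi_sum
    norm_num at hpi_sum
  have hfnn : ∀ k : ℕ,
      0 ≤ (if a - δ < δ * ((k : ℝ) - R) ∧ δ * ((k : ℝ) - R) ≤ a + δ then pi k else 0) := by
    intro k; split_ifs; exacts [hpi_nonneg k, le_rfl]
  have hfle : ∀ k : ℕ,
      (if a - δ < δ * ((k : ℝ) - R) ∧ δ * ((k : ℝ) - R) ≤ a + δ then pi k else 0) ≤ pi k := by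
    intro k; split_ifs; exacts [le_rfl, hpi_nonneg k]
  have hfs : Summable (fun k : ℕ =>
      if a - δ < δ * ((k : ℝ) - R) ∧ δ * ((k : ℝ) - R) ≤ a + δ then pi k else 0) :=
    Summable.of_nonneg_of_le hfnn hfle hsummable
  by_cases htriv : 1 ≤ 9 * δ ^ 2
  · -- trivial case : LHS ≤ 1 ≤ 9δ²
    have h1 : (∑' k : ℕ,
        if a - δ < δ * ((k : ℝ) - R) ∧ δ * ((k : ℝ) - R) ≤ a + δ then pi k else 0)
        ≤ ∑' k, pi k := Summable.tsum_le_tsum hfle hfs hsummable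
    rw [hpi_sum] at h1
    have h2 : 0 ≤ om * (2 * δ) := mul_nonneg hom0 (by positivity)
    have h3 : 0 ≤ 8 * δ ^ 4 := by positivity
    linarith
  push_neg at htriv
  have hR9 : 9 < R := by
    rw [hδsq] at htriv
    have h9 : (9:ℝ) / R < 1 := by
      have : (9:ℝ) * (1 / R) = 9 / R := by ring
      linarith [this ▸ htriv]
    exact (div_lt_one hR0).mp h9
  -- flow rewritten without lam, mu
  have hflow' : ∀ k : ℕ, R * pi k = min ((k : ℝ) + 1) (n : ℝ) * pi (k + 1) := by
    intro k
    have h := hflow k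
    have hlamR : lam = R * mu := by
      rw [hR]; field_simp
    apply mul_left_cancel₀ hmu.ne'
    rw [hlamR] at h
    linarith [h]
  have hup : ∀ k : ℕ, (k : ℝ) + 1 ≤ R → pi k ≤ pi (k + 1) := by
    intro k hk
    have h := hflow' k
    have hmin : min ((k : ℝ) + 1) (n : ℝ) ≤ R := le_trans (min_le_left _ _) hk
    have : R * pi k ≤ R * pi (k + 1) := by
      rw [h]; exact mul_le_mul_of_nonneg_right hmin (hpi_nonneg _)
    exact (mul_le_mul_iff_right₀ hR0).mp this
  have hdown : ∀ k : ℕ, R ≤ (k : ℝ) + 1 → pi (k + 1) ≤ pi k := by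
    intro k hk
    have h := hflow' k
    have hmin : R ≤ min ((k : ℝ) + 1) (n : ℝ) := le_min hk hRn.le
    have : R * pi (k + 1) ≤ R * pi k := by
      rw [h]; exact mul_le_mul_of_nonneg_right hmin (hpi_nonneg _)
    exact (mul_le_mul_iff_right₀ hR0).mp this
  have hratio : ∀ k : ℕ, R * pi k ≤ ((k : ℝ) + 1) * pi (k + 1) := by
    intro k
    rw [hflow' k]
    exact mul_le_mul_of_nonneg_right (min_le_left _ _) (hpi_nonneg _)
  -- summability of the tail indicator sums
  have hGsummable : ∀ t : ℝ,
      Summable (fun k : ℕ => if δ * ((k : ℝ) - R) ≤ t then pi k else 0) := by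
    intro t
    apply Summable.of_nonneg_of_le (g := fun k : ℕ => if δ * ((k : ℝ) - R) ≤ t then pi k else 0)
      (f := pi)
    · intro k; split_ifs; exacts [hpi_nonneg k, le_rfl]
    · intro k; split_ifs; exacts [le_rfl, hpi_nonneg k]
    · exact hsummable
  -- the window bound : any 4 consecutive atoms carry mass at most 2 dK + 4 δ ω
  have hwindow : ∀ b : ℕ,
      pi b + pi (b + 1) + pi (b + 2) + pi (b + 3) ≤ 2 * dK + om * (4 * δ) := by
    intro b
    have h1 := hdK (δ * (((b : ℝ) + 3) - R))
    have h0 := hdK (δ * (((b : ℝ) - 1) - R))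
    have hpt : ∀ k : ℕ,
        (if δ * ((k : ℝ) - R) ≤ δ * (((b : ℝ) + 3) - R) then pi k else 0)
          - (if δ * ((k : ℝ) - R) ≤ δ * (((b : ℝ) - 1) - R) then pi k else 0)
        = if b ≤ k ∧ k ≤ b + 3 then pi k else 0 := by
      intro k
      have hk1 : (δ * ((k : ℝ) - R) ≤ δ * (((b : ℝ) + 3) - R)) ↔ k ≤ b + 3 := by
        rw [mul_le_mul_iff_right₀ hδ0, sub_le_sub_iff_right]
        constructor
        · intro h; exact_mod_cast (by push_cast; linarith : ((k:ℕ):ℝ) ≤ ((b + 3 : ℕ):ℝ))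
        · intro h; have : ((k:ℕ):ℝ) ≤ ((b + 3 : ℕ):ℝ) := by exact_mod_cast h
          push_cast at this; linarith
      have hk0 : (δ * ((k : ℝ) - R) ≤ δ * (((b : ℝ) - 1) - R)) ↔ k + 1 ≤ b := by
        rw [mul_le_mul_iff_right₀ hδ0, sub_le_sub_iff_right]
        constructor
        · intro h; exact_mod_cast (by push_cast; linarith : ((k + 1 : ℕ):ℝ) ≤ ((b:ℕ):ℝ))
        · intro h; have : ((k + 1 : ℕ):ℝ) ≤ ((b:ℕ):ℝ) := by exact_mod_cast h
          push_cast at this; linarith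
      rw [if_congr hk1 rfl rfl, if_congr hk0 rfl rfl]
      by_cases hA : k ≤ b + 3
      · by_cases hB : k + 1 ≤ b
        · rw [if_pos hA, if_pos hB, if_neg (by omega)]; ring
        · rw [if_pos hA, if_neg hB, if_pos (by omega : b ≤ k ∧ k ≤ b + 3)]; ring
      · rw [if_neg hA, if_neg (by omega), if_neg (by omega)]; ring
    have key : (∑' k : ℕ, if δ * ((k : ℝ) - R) ≤ δ * (((b : ℝ) + 3) - R) then pi k else 0)
        - (∑' k : ℕ, if δ * ((k : ℝ) - R) ≤ δ * (((b : ℝ) - 1) - R) then pi k else 0)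
        = pi b + pi (b + 1) + pi (b + 2) + pi (b + 3) := by
      rw [← Summable.tsum_sub (hGsummable _) (hGsummable _), tsum_congr hpt,
        tsum_eq_sum (s := ({b, b + 1, b + 2, b + 3} : Finset ℕ))
          (by intro k hk
              simp only [Finset.mem_insert, Finset.mem_singleton] at hk
              exact if_neg (by omega)),
        Finset.sum_insert (by simp only [Finset.mem_insert, Finset.mem_singleton]; omega),
        Finset.sum_insert (by simp only [Finset.mem_insert, Finset.mem_singleton]; omega),
        Finset.sum_insert (by simp only [Finset.mem_singleton]; omega),
        Finset.sum_singleton,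
        if_pos (by omega : b ≤ b ∧ b ≤ b + 3),
        if_pos (by omega : b ≤ b + 1 ∧ b + 1 ≤ b + 3),
        if_pos (by omega : b ≤ b + 2 ∧ b + 2 ≤ b + 3),
        if_pos (by omega : b ≤ b + 3 ∧ b + 3 ≤ b + 3)]
      ring
    have hFd : F (δ * (((b : ℝ) + 3) - R)) - F (δ * (((b : ℝ) - 1) - R)) ≤ om * (4 * δ) := by
      have h := hom (δ * (((b : ℝ) + 3) - R)) (δ * (((b : ℝ) - 1) - R))
      have habs : |δ * (((b : ℝ) + 3) - R) - δ * (((b : ℝ) - 1) - R)| = 4 * δ := by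
        rw [show δ * (((b : ℝ) + 3) - R) - δ * (((b : ℝ) - 1) - R) = 4 * δ by ring]
        exact abs_of_pos (by positivity)
      rw [habs] at h
      exact le_trans (le_abs_self _) h
    have e1 := abs_le.mp h1
    have e0 := abs_le.mp h0
    linarith [key, e1.1, e1.2, e0.1, e0.2, hFd]
  -- identify the (at most two) atoms in the interval
  have hfl : ((⌊a / δ + R⌋ : ℤ) : ℝ) ≤ a / δ + R := Int.floor_le _
  have hfl2 : a / δ + R - 1 < ((⌊a / δ + R⌋ : ℤ) : ℝ) := Int.sub_one_lt_floor _
  set j0 : ℤ := ⌊a / δ + R⌋ with hj0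
  have hcond : ∀ k : ℕ,
      ((a - δ < δ * ((k : ℝ) - R)) ∧ (δ * ((k : ℝ) - R) ≤ a + δ))
        ↔ (j0 ≤ (k : ℤ) ∧ (k : ℤ) ≤ j0 + 1) := by
    intro k
    constructor
    · rintro ⟨h1, h2⟩
      constructor
      · have h' : a / δ < (k : ℝ) - R + 1 := by
          rw [div_lt_iff₀ hδ0]; linarith [h1]
        have hlt : ((j0 : ℤ) : ℝ) < (k : ℝ) + 1 := lt_of_le_of_lt hfl (by linarith)
        have : (j0 : ℤ) < (k : ℤ) + 1 := by exact_mod_cast hlt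
        omega
      · have h' : (k : ℝ) - R - 1 ≤ a / δ := by
          rw [le_div_iff₀ hδ0]; linarith [h2]
        have : ((k : ℤ) - 1 : ℤ) ≤ j0 := by
          rw [hj0]
          apply Int.le_floor.mpr
          push_cast
          linarith
        omega
    · rintro ⟨hk1, hk2⟩
      have hr1 : a / δ + R - 1 < (k : ℝ) := by
        have : ((j0 : ℤ) : ℝ) ≤ ((k : ℤ) : ℝ) := by exact_mod_cast hk1
        push_cast at this
        linarith [hfl2]
      have hr2 : (k : ℝ) ≤ a / δ + R + 1 := by
        have : ((k : ℤ) : ℝ) ≤ ((j0 : ℤ) : ℝ) + 1 := by exact_mod_cast hk2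
        push_cast at this
        linarith [hfl]
      constructor
      · have h' : a < ((k : ℝ) - R + 1) * δ := (div_lt_iff₀ hδ0).mp (by linarith)
        linarith [h']
      · have h' : ((k : ℝ) - R - 1) * δ ≤ a := (le_div_iff₀ hδ0).mp (by linarith)
        linarith [h']
  have hLHSexpr : (∑' k : ℕ,
      if a - δ < δ * ((k : ℝ) - R) ∧ δ * ((k : ℝ) - R) ≤ a + δ then pi k else 0)
      = ∑' k : ℕ, if j0 ≤ (k : ℤ) ∧ (k : ℤ) ≤ j0 + 1 then pi k else 0 :=
    tsum_congr fun k => if_congr (hcond k) rfl rfl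
  rw [hLHSexpr]
  by_cases hneg : j0 < -1
  · -- interval entirely to the left of all atoms
    have hzero : ∀ k : ℕ, (if j0 ≤ (k : ℤ) ∧ (k : ℤ) ≤ j0 + 1 then pi k else 0) = 0 := by
      intro k
      exact if_neg (by omega)
    rw [tsum_congr hzero, tsum_zero]
    have h2 : 0 ≤ om * (2 * δ) := mul_nonneg hom0 (by positivity)
    have h3 : 0 ≤ 9 * δ ^ 2 := by positivity
    have h4 : 0 ≤ 8 * δ ^ 4 := by positivity
    linarith
  by_cases hj0m1 : j0 = -1
  · -- only the atom k = 0 can lie in the interval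
    have hzero : ∀ k : ℕ,
        (if j0 ≤ (k : ℤ) ∧ (k : ℤ) ≤ j0 + 1 then pi k else 0) = if k = 0 then pi k else 0 := by
      intro k
      exact if_congr (by omega) rfl rfl
    rw [tsum_congr hzero, tsum_eq_single 0 (fun b hb => if_neg hb), if_pos rfl]
    have hW := hwindow 0
    norm_num at hW
    have hup0 : pi 0 ≤ pi 1 := by
      have := hup 0 (by norm_num; linarith)
      norm_num at this
      exact this
    have h3 : 0 ≤ 9 * δ ^ 2 := by positivity
    have h4 : 0 ≤ 8 * δ ^ 4 := by positivity
    linarith [hpi_nonneg 2, hpi_nonneg 3]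
  have hj0nn : 0 ≤ j0 := by omega
  obtain ⟨m, hm⟩ : ∃ m : ℕ, (m : ℤ) = j0 := ⟨j0.toNat, Int.toNat_of_nonneg hj0nn⟩
  have hmnat : ∀ k : ℕ,
      (if j0 ≤ (k : ℤ) ∧ (k : ℤ) ≤ j0 + 1 then pi k else 0)
        = if m ≤ k ∧ k ≤ m + 1 then pi k else 0 := by
    intro k
    exact if_congr (by omega) rfl rfl
  rw [tsum_congr hmnat,
    tsum_eq_sum (s := ({m, m + 1} : Finset ℕ))
      (by intro k hk
          simp only [Finset.mem_insert, Finset.mem_singleton] at hk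
          exact if_neg (by omega)),
    Finset.sum_insert (by simp only [Finset.mem_singleton]; omega),
    Finset.sum_singleton,
    if_pos (by omega : m ≤ m ∧ m ≤ m + 1),
    if_pos (by omega : m ≤ m + 1 ∧ m + 1 ≤ m + 1)]
  -- goal : pi m + pi (m+1) ≤ om * (2δ) + dK + 9δ² + 8δ⁴
  by_cases hL : (m : ℝ) + 3 ≤ R
  · -- left of the mode: the next two atoms are at least as heavy
    have hu0 : pi m ≤ pi (m + 1) := hup m (by linarith)
    have hu1 : pi (m + 1) ≤ pi (m + 2) := by
      have := hup (m + 1) (by push_cast; linarith)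
      rw [show m + 1 + 1 = m + 2 from rfl] at this
      exact this
    have hu2 : pi (m + 2) ≤ pi (m + 3) := by
      have := hup (m + 2) (by push_cast; linarith)
      rw [show m + 2 + 1 = m + 3 from rfl] at this
      exact this
    have hW := hwindow m
    have h3 : 0 ≤ 9 * δ ^ 2 := by positivity
    have h4 : 0 ≤ 8 * δ ^ 4 := by positivity
    linarith
  by_cases hRc : R + 2 ≤ (m : ℝ)
  · -- right of the mode: the previous two atoms are at least as heavy
    have hm2 : 2 ≤ m := by
      have h11 : (2 : ℝ) ≤ (m : ℝ) := by linarith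
      exact_mod_cast h11
    obtain ⟨b, rfl⟩ : ∃ b : ℕ, m = b + 2 := ⟨m - 2, by omega⟩
    have hbR : R ≤ (b : ℝ) + 1 := by push_cast at hRc ⊢; linarith
    have hd0 : pi (b + 1) ≤ pi b := hdown b hbR
    have hd1 : pi (b + 2) ≤ pi (b + 1) := by
      have := hdown (b + 1) (by push_cast at hRc ⊢; linarith)
      rw [show b + 1 + 1 = b + 2 from rfl] at this
      exact this
    have hd2 : pi (b + 3) ≤ pi (b + 2) := by
      have := hdown (b + 2) (by push_cast at hRc ⊢; linarith)
      rw [show b + 2 + 1 = b + 3 from rfl] at this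
      exact this
    have hW := hwindow b
    have h3 : 0 ≤ 9 * δ ^ 2 := by positivity
    have h4 : 0 ≤ 8 * δ ^ 4 := by positivity
    show pi (b + 2) + pi (b + 3) ≤ _
    linarith
  -- middle case : near the mode
  push_neg at hL hRc
  have r0 : R * pi m ≤ ((m : ℝ) + 1) * pi (m + 1) := hratio m
  have r1 : R * pi (m + 1) ≤ ((m : ℝ) + 2) * pi (m + 2) := by
    have := hratio (m + 1)
    rw [show m + 1 + 1 = m + 2 from rfl] at this
    push_cast at this
    linarith
  have r2 : R * pi (m + 2) ≤ ((m : ℝ) + 3) * pi (m + 3) := by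
    have := hratio (m + 2)
    rw [show m + 2 + 1 = m + 3 from rfl] at this
    push_cast at this
    linarith
  have hmnn : (0 : ℝ) ≤ (m : ℝ) := Nat.cast_nonneg m
  have A2 : R ^ 2 * pi m ≤ (R + 5) ^ 2 * pi (m + 2) := by
    have s1 : R * (R * pi m) ≤ R * (((m : ℝ) + 1) * pi (m + 1)) :=
      mul_le_mul_of_nonneg_left r0 hR0.le
    have s2 : ((m : ℝ) + 1) * (R * pi (m + 1)) ≤ ((m : ℝ) + 1) * (((m : ℝ) + 2) * pi (m + 2)) :=
      mul_le_mul_of_nonneg_left r1 (by linarith)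
    have hprod : ((m : ℝ) + 1) * ((m : ℝ) + 2) ≤ (R + 3) * (R + 4) := by
      have h1 : (m : ℝ) + 1 ≤ R + 3 := by linarith
      have h2 : (m : ℝ) + 2 ≤ R + 4 := by linarith
      have h3 : (0:ℝ) ≤ (m : ℝ) + 2 := by linarith
      have h4 : (0:ℝ) ≤ R + 3 := by linarith
      exact mul_le_mul h1 h2 h3 h4
    have hsq : (R + 3) * (R + 4) ≤ (R + 5) ^ 2 := by nlinarith [hR9]
    have s3 : ((m : ℝ) + 1) * (((m : ℝ) + 2) * pi (m + 2)) ≤ (R + 5) ^ 2 * pi (m + 2) := by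
      have := mul_le_mul_of_nonneg_right (le_trans hprod hsq) (hpi_nonneg (m + 2))
      linarith [this]
    linarith [s1, s2, s3]
  have A3 : R ^ 2 * pi (m + 1) ≤ (R + 5) ^ 2 * pi (m + 3) := by
    have s1 : R * (R * pi (m + 1)) ≤ R * (((m : ℝ) + 2) * pi (m + 2)) :=
      mul_le_mul_of_nonneg_left r1 hR0.le
    have s2 : ((m : ℝ) + 2) * (R * pi (m + 2)) ≤ ((m : ℝ) + 2) * (((m : ℝ) + 3) * pi (m + 3)) :=
      mul_le_mul_of_nonneg_left r2 (by linarith)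
    have hprod : ((m : ℝ) + 2) * ((m : ℝ) + 3) ≤ (R + 4) * (R + 5) := by
      have h1 : (m : ℝ) + 2 ≤ R + 4 := by linarith
      have h2 : (m : ℝ) + 3 ≤ R + 5 := by linarith
      have h3 : (0:ℝ) ≤ (m : ℝ) + 3 := by linarith
      have h4 : (0:ℝ) ≤ R + 4 := by linarith
      exact mul_le_mul h1 h2 h3 h4
    have hsq : (R + 4) * (R + 5) ≤ (R + 5) ^ 2 := by nlinarith [hR9]
    have s3 : ((m : ℝ) + 2) * (((m : ℝ) + 3) * pi (m + 3)) ≤ (R + 5) ^ 2 * pi (m + 3) := by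
      have := mul_le_mul_of_nonneg_right (le_trans hprod hsq) (hpi_nonneg (m + 3))
      linarith [this]
    linarith [s1, s2, s3]
  have hS1 : pi m + pi (m + 1) ≤ 1 := by
    have h := Summable.sum_le_tsum ({m, m + 1} : Finset ℕ) (fun k _ => hpi_nonneg k) hsummable
    rw [hpi_sum, Finset.sum_insert (by simp only [Finset.mem_singleton]; omega),
      Finset.sum_singleton] at h
    exact h
  have hW := hwindow m
  have e2 : δ ^ 2 * R = 1 := by
    rw [hδsq]; field_simp
  have eB : δ ^ 2 * R ^ 2 = R := by
    rw [hδsq]; field_simp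
  have eC : δ ^ 4 * R ^ 2 = 1 := by
    rw [hδ4]; field_simp
  have eD : δ ^ 4 * R = δ ^ 2 := by
    rw [hδ4, hδsq]; field_simp
  have h25 : 10 * R + 25 ≤ 2 * (R + 5) ^ 2 * (9 * δ ^ 2 + 8 * δ ^ 4) := by
    nlinarith [e2, eB, eC, eD, hR9, sq_nonneg δ, sq_nonneg (δ ^ 2)]
  have hQ : (0 : ℝ) < 2 * (R + 5) ^ 2 := by positivity
  rw [← mul_le_mul_iff_right₀ hQ]
  have hW' : (R + 5) ^ 2 * (pi m + pi (m + 1) + pi (m + 2) + pi (m + 3))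
      ≤ (R + 5) ^ 2 * (2 * dK + om * (4 * δ)) :=
    mul_le_mul_of_nonneg_left hW (by positivity)
  have hS1' : (10 * R + 25) * (pi m + pi (m + 1)) ≤ (10 * R + 25) * 1 :=
    mul_le_mul_of_nonneg_left hS1 (by linarith)
  nlinarith [hW', hS1', A2, A3, h25]
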